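/- For any lattice (d,k)-polytope P with d ≥ 3 and any two vertices u, v of P, the edge-graph distance between u and v is at most δ(d−1,k) + k. -/

import Mathlib

open Set

noncomputable def edgeGraph (d : ℕ) (P : Set (Fin d → ℝ)) : SimpleGraph (Fin d → ℝ) where
  Adj a b := a ≠ b ∧ IsExtreme ℝ P (segment ℝ a b)
  symm := by
    constructor
    intro a b h
    exact ⟨h.1.symm, by rw [segment_symm]; exact h.2⟩
  loopless := by
    constructor
    intro a h
    exact h.1 rfl

/-- Edge-graph diameter of a polytope, as the sup of pairwise distances between vertices. -/
noncomputable def polyDiam (d : ℕ) (P : Set (Fin d → ℝ)) : ℕ :=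
  sSup {n : ℕ | ∃ u ∈ P.extremePoints ℝ, ∃ v ∈ P.extremePoints ℝ,
    (edgeGraph d P).dist u v = n}

/-- A lattice (d,k)-polytope: convex hull of a nonempty finite set of points in {0,…,k}^d. -/
def IsLatticePolytope (d k : ℕ) (P : Set (Fin d → ℝ)) : Prop :=
  ∃ V : Finset (Fin d → ℝ), V.Nonempty ∧
    (∀ x ∈ V, ∀ i, ∃ m : ℕ, m ≤ k ∧ x i = (m : ℝ)) ∧
    P = convexHull ℝ (V : Set (Fin d → ℝ))

/-- δ(d,k): the largest edge-graph diameter of a lattice (d,k)-polytope. -/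
noncomputable def deltaLP (d k : ℕ) : ℕ :=
  sSup {n : ℕ | ∃ P : Set (Fin d → ℝ), IsLatticePolytope d k P ∧ polyDiam d P = n}


open scoped Classical

/-- If `x` is in the convex hull of a finite set, some generator has `f`-value `≤ f x`. -/
lemma exists_le_of_mem_convexHull {d : ℕ} (V : Finset (Fin d → ℝ)) (f : (Fin d → ℝ) →ₗ[ℝ] ℝ)
    {x : Fin d → ℝ} (hx : x ∈ convexHull ℝ (V : Set (Fin d → ℝ))) :
    ∃ v ∈ V, f v ≤ f x := by
  by_contra h
  push_neg at h
  have hconv : Convex ℝ {y : Fin d → ℝ | f x < f y} := convex_halfSpace_gt f.isLinear (f x)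
  have hsub : convexHull ℝ (V : Set (Fin d → ℝ)) ⊆ {y | f x < f y} :=
    convexHull_min (fun v hv => h v hv) hconv
  exact lt_irrefl (f x) (hsub hx)

/-- The minimizing set of a linear functional over a polytope is an extreme subset. -/
lemma face_extreme {d : ℕ} (V : Finset (Fin d → ℝ)) (f : (Fin d → ℝ) →ₗ[ℝ] ℝ) (m : ℝ)
    (hm : ∀ v ∈ V, m ≤ f v) :
    IsExtreme ℝ (convexHull ℝ (V : Set (Fin d → ℝ)))
      {x ∈ convexHull ℝ (V : Set (Fin d → ℝ)) | f x = m} := by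
  have hge : ∀ y ∈ convexHull ℝ (V : Set (Fin d → ℝ)), m ≤ f y := fun y hy =>
    convexHull_min (fun v hv => hm v hv) (convex_halfSpace_ge f.isLinear m) hy
  constructor
  · exact fun x hx => hx.1
  · rintro x₁ hx₁ x₂ hx₂ x ⟨hxP, hfx⟩ hseg
    obtain ⟨a, b, ha, hb, hab, hx⟩ := hseg
    have h1 := hge _ hx₁
    have h2 := hge _ hx₂
    have hfxe : a * f x₁ + b * f x₂ = m := by
      rw [← hfx, ← hx]; simp [map_add, map_smul, smul_eq_mul]
    have e1 : a * (f x₁ - m) + b * (f x₂ - m) = 0 := by linear_combination hfxe - m * hab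
    have t1 : 0 ≤ a * (f x₁ - m) := mul_nonneg ha.le (sub_nonneg.2 h1)
    have t2 : 0 ≤ b * (f x₂ - m) := mul_nonneg hb.le (sub_nonneg.2 h2)
    have z1 : a * (f x₁ - m) = 0 := le_antisymm (by linarith) t1
    have z2 : b * (f x₂ - m) = 0 := le_antisymm (by linarith) t2
    refine (?_ : _ ∧ x₂ ∈ {x ∈ convexHull ℝ (V : Set (Fin d → ℝ)) | f x = m}).1
    constructor
    · refine ⟨hx₁, ?_⟩
      rcases mul_eq_zero.1 z1 with h | h
      · exact absurd h ha.ne'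
      · linarith [sub_eq_zero.1 h]
    · refine ⟨hx₂, ?_⟩
      rcases mul_eq_zero.1 z2 with h | h
      · exact absurd h hb.ne'
      · linarith [sub_eq_zero.1 h]

/-- The minimizing set equals the convex hull of the minimizing generators. -/
lemma face_eq_convexHull {d : ℕ} (V : Finset (Fin d → ℝ)) (f : (Fin d → ℝ) →ₗ[ℝ] ℝ) (m : ℝ)
    (hm : ∀ v ∈ V, m ≤ f v) :
    {x ∈ convexHull ℝ (V : Set (Fin d → ℝ)) | f x = m}
      = convexHull ℝ ((V.filter (fun v => f v = m)) : Set (Fin d → ℝ)) := by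
  apply Subset.antisymm
  · rintro x ⟨hxP, hfx⟩
    rw [Finset.convexHull_eq] at hxP
    obtain ⟨w, hw0, hw1, hcm⟩ := hxP
    have hxs : x = ∑ y ∈ V, w y • y := by
      rw [← hcm, Finset.centerMass, hw1]; simp
    have hfs : ∑ y ∈ V, w y * (f y - m) = 0 := by
      have : f x = ∑ y ∈ V, w y * f y := by
        rw [hxs, map_sum]; simp [map_smul, smul_eq_mul]
      simp only [mul_sub, Finset.sum_sub_distrib, ← Finset.sum_mul, hw1, one_mul]
      rw [← this, hfx]; ring
    have hzero : ∀ y ∈ V, w y * (f y - m) = 0 := by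
      exact (Finset.sum_eq_zero_iff_of_nonneg (fun y hy =>
        mul_nonneg (hw0 y hy) (sub_nonneg.2 (hm y hy)))).1 hfs
    have hwz : ∀ y ∈ V, f y ≠ m → w y = 0 := by
      intro y hy hne
      rcases mul_eq_zero.1 (hzero y hy) with h | h
      · exact h
      · exact absurd (sub_eq_zero.1 h) hne
    set VF := V.filter (fun v => f v = m) with hVF
    have hsum' : ∑ y ∈ VF, w y = 1 := by
      rw [← hw1]
      apply Finset.sum_subset (Finset.filter_subset _ _)
      intro y hy hyn
      exact hwz y hy (by simpa [hVF, hy] using hyn)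
    have hxs' : x = ∑ y ∈ VF, w y • y := by
      rw [hxs]
      apply (Finset.sum_subset (Finset.filter_subset _ _) ?_).symm
      intro y hy hyn
      rw [hwz y hy (by simpa [hVF, hy] using hyn), zero_smul]
    have := VF.centerMass_mem_convexHull (w := w) (z := id)
      (fun y hy => hw0 y (Finset.filter_subset _ _ hy))
      (by rw [hsum']; norm_num) (fun y hy => Finset.mem_coe.2 hy)
    rw [Finset.centerMass, hsum', inv_one, one_smul] at this
    simp only [id_eq] at this
    rwa [← hxs'] at this
  · apply convexHull_min
    · intro y hy
      rw [Finset.mem_coe, Finset.mem_filter] at hy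
      exact ⟨subset_convexHull ℝ _ (Finset.mem_coe.2 hy.1), hy.2⟩
    · have : {x ∈ convexHull ℝ (V : Set (Fin d → ℝ)) | f x = m}
          = convexHull ℝ (V : Set (Fin d → ℝ)) ∩ {x | f x = m} := by
        ext x; simp [Set.mem_sep_iff]
      rw [this]
      exact (convex_convexHull ℝ _).inter (convex_hyperplane f.isLinear m)

/-- An extreme point of the hull of a finite set is not in the hull of the others. -/
lemma extremePoint_not_mem_convexHull_erase {d : ℕ} (S : Finset (Fin d → ℝ)) {x : Fin d → ℝ}
    (hx : x ∈ (convexHull ℝ (S : Set (Fin d → ℝ))).extremePoints ℝ) :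
    x ∉ convexHull ℝ ((S.erase x) : Set (Fin d → ℝ)) := by
  have h := (convex_convexHull ℝ _).mem_extremePoints_iff_mem_diff_convexHull_diff.1 hx
  intro hc
  apply h.2
  refine convexHull_mono ?_ hc
  intro y hy
  rw [Finset.coe_erase] at hy
  exact ⟨subset_convexHull ℝ _ hy.1, hy.2⟩

/-- Packaged version of `face_eq_convexHull` avoiding decidability instances. -/
lemma face_eq_convexHull' {d : ℕ} (V : Finset (Fin d → ℝ)) (f : (Fin d → ℝ) →ₗ[ℝ] ℝ) (m : ℝ)
    (hm : ∀ v ∈ V, m ≤ f v) :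
    ∃ VF : Finset (Fin d → ℝ), VF ⊆ V ∧ (∀ w, w ∈ VF ↔ w ∈ V ∧ f w = m) ∧
      {x ∈ convexHull ℝ (V : Set (Fin d → ℝ)) | f x = m}
        = convexHull ℝ (VF : Set (Fin d → ℝ)) :=
  ⟨V.filter (fun v => f v = m), Finset.filter_subset _ _, fun w => Finset.mem_filter,
    face_eq_convexHull V f m hm⟩

/-- There is an extreme point of the hull of a finite set minimizing a given functional. -/
lemma exists_extremePoint_min {d : ℕ} (f : (Fin d → ℝ) →ₗ[ℝ] ℝ) :
    ∀ (n : ℕ) (V : Finset (Fin d → ℝ)), V.card ≤ n → V.Nonempty →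
    ∃ z ∈ V, z ∈ (convexHull ℝ (V : Set (Fin d → ℝ))).extremePoints ℝ ∧ ∀ s ∈ V, f z ≤ f s := by
  intro n
  induction n with
  | zero =>
    intro V hcard hne
    rw [Nat.le_zero, Finset.card_eq_zero] at hcard
    simp [hcard] at hne
  | succ n ih =>
    intro V hcard hne
    obtain ⟨v, hvV, hvmin⟩ := V.exists_min_image f hne
    by_cases hv : v ∈ convexHull ℝ ((V.erase v : Finset (Fin d → ℝ)) : Set (Fin d → ℝ))
    · have herase_ne : (V.erase v).Nonempty := by
        rcases (V.erase v).eq_empty_or_nonempty with h | h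
        · rw [h] at hv; simp at hv
        · exact h
      have hsub : convexHull ℝ (V : Set (Fin d → ℝ))
          = convexHull ℝ ((V.erase v : Finset (Fin d → ℝ)) : Set (Fin d → ℝ)) := by
        apply Subset.antisymm
        · apply convexHull_min _ (convex_convexHull ℝ _)
          intro y hy
          rw [Finset.mem_coe] at hy
          by_cases hyv : y = v
          · subst hyv; exact hv
          · exact subset_convexHull ℝ _ (Finset.mem_coe.2 (Finset.mem_erase.2 ⟨hyv, hy⟩))
        · exact convexHull_mono (Finset.coe_subset.2 (Finset.erase_subset _ _))
      have hcard' : (V.erase v).card ≤ n := by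
        have := Finset.card_erase_of_mem hvV
        omega
      obtain ⟨z, hz1, hz2, hz3⟩ := ih (V.erase v) hcard' herase_ne
      refine ⟨z, Finset.mem_of_mem_erase hz1, by rw [hsub]; exact hz2, ?_⟩
      intro s hs
      by_cases hsv : s = v
      · subst hsv
        obtain ⟨w, hw, hfw⟩ := exists_le_of_mem_convexHull _ f hv
        exact (hz3 w hw).trans hfw
      · exact hz3 s (Finset.mem_erase.2 ⟨hsv, hs⟩)
    · obtain ⟨g, α, hgv, hgs⟩ := geometric_hahn_banach_point_closed
        (convex_convexHull ℝ _) ((V.erase v).finite_toSet.isClosed_convexHull (𝕜 := ℝ)) hv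
      have hmge : ∀ s ∈ V, g v ≤ g s := by
        intro s hs
        by_cases hsv : s = v
        · subst hsv; exact le_refl _
        · exact (hgv.trans (hgs s (subset_convexHull ℝ _
            (Finset.mem_coe.2 (Finset.mem_erase.2 ⟨hsv, hs⟩))))).le
      have hface := face_extreme V g.toLinearMap (g v) hmge
      have heq := face_eq_convexHull V g.toLinearMap (g v) hmge
      have hfilter : V.filter (fun s => g.toLinearMap s = g v) = {v} := by
        ext s
        simp only [Finset.mem_filter, Finset.mem_singleton, ContinuousLinearMap.coe_coe]
        constructor
        · rintro ⟨hs, he⟩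
          by_contra hne
          have := hgs s (subset_convexHull ℝ _
            (Finset.mem_coe.2 (Finset.mem_erase.2 ⟨hne, hs⟩)))
          have : g v < g s := hgv.trans this
          rw [he] at this
          exact lt_irrefl _ this
        · rintro rfl; exact ⟨hvV, rfl⟩
      have hsetv : {x ∈ convexHull ℝ (V : Set (Fin d → ℝ)) | g.toLinearMap x = g v}
          = {v} := by
        rw [heq, hfilter]
        simp
      refine ⟨v, hvV, ?_, hvmin⟩
      rw [← isExtreme_singleton]
      rw [← hsetv]
      exact hface

/-- The right endpoint of an extreme segment is an extreme point. -/
lemma right_mem_extremePoints_of_isExtreme_segment {d : ℕ} {P : Set (Fin d → ℝ)}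
    {a b : Fin d → ℝ} (h : IsExtreme ℝ P (segment ℝ a b)) : b ∈ P.extremePoints ℝ := by
  by_cases hab : a = b
  · subst hab
    rw [segment_same] at h
    exact isExtreme_singleton.1 h
  · -- use the functional x ↦ -∑ (b i - a i) * x i, minimized at b on [a,b]
    set fl : (Fin d → ℝ) →ₗ[ℝ] ℝ := -(∑ i, (b i - a i) • LinearMap.proj i) with hfl
    have hflval : ∀ x, fl x = -∑ i, (b i - a i) * x i := by
      intro x
      simp [hfl, LinearMap.sum_apply, LinearMap.smul_apply, LinearMap.proj_apply, smul_eq_mul]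
    have hlt : fl b < fl a := by
      rw [hflval, hflval, neg_lt_neg_iff]
      have : ∀ i, (b i - a i) * a i < (b i - a i) * b i ∨ (b i - a i) * a i = (b i - a i) * b i := by
        intro i
        rcases lt_trichotomy (a i) (b i) with h' | h' | h'
        · left; nlinarith
        · right; rw [h']
        · left; nlinarith
      have hne : ∃ i, a i ≠ b i := Function.ne_iff.1 hab
      obtain ⟨i₀, hi₀⟩ := hne
      apply Finset.sum_lt_sum
      · intro i _
        rcases this i with h' | h'
        · exact h'.le
        · exact h'.le
      · refine ⟨i₀, Finset.mem_univ _, ?_⟩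
        rcases lt_trichotomy (a i₀) (b i₀) with h' | h' | h'
        · nlinarith
        · exact absurd h' hi₀
        · nlinarith
    have hseg : segment ℝ a b = convexHull ℝ (({a, b} : Finset (Fin d → ℝ)) : Set (Fin d → ℝ)) := by
      rw [Finset.coe_pair, convexHull_pair]
    have hmge : ∀ v ∈ ({a, b} : Finset (Fin d → ℝ)), fl b ≤ fl v := by
      intro v hv
      rcases Finset.mem_insert.1 hv with rfl | hv
      · exact hlt.le
      · rw [Finset.mem_singleton.1 hv]
    have hface := face_extreme ({a, b} : Finset (Fin d → ℝ)) fl (fl b) hmge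
    have heq := face_eq_convexHull ({a, b} : Finset (Fin d → ℝ)) fl (fl b) hmge
    have hfilter : ({a, b} : Finset (Fin d → ℝ)).filter (fun v => fl v = fl b) = {b} := by
      ext s
      simp only [Finset.mem_filter, Finset.mem_singleton, Finset.mem_insert]
      constructor
      · rintro ⟨rfl | rfl, he⟩
        · exact absurd he hlt.ne'
        · rfl
      · rintro rfl; exact ⟨Or.inr rfl, rfl⟩
    have hsetb : {x ∈ convexHull ℝ (({a, b} : Finset (Fin d → ℝ)) : Set (Fin d → ℝ)) |
        fl x = fl b} = {b} := by
      rw [heq, hfilter]; simp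
    have hbext : IsExtreme ℝ (segment ℝ a b) {b} := by
      rw [hseg, ← hsetb]
      exact hface
    exact isExtreme_singleton.1 (h.trans hbext)

lemma left_mem_extremePoints_of_isExtreme_segment {d : ℕ} {P : Set (Fin d → ℝ)}
    {a b : Fin d → ℝ} (h : IsExtreme ℝ P (segment ℝ a b)) : a ∈ P.extremePoints ℝ := by
  rw [segment_symm] at h
  exact right_mem_extremePoints_of_isExtreme_segment h

set_option maxHeartbeats 1000000 in
/-- Key lemma: a vertex not minimizing `f` has a neighbor with strictly smaller `f`-value. -/
lemma exists_improving_neighbor {d : ℕ} (V : Finset (Fin d → ℝ))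
    (f : (Fin d → ℝ) →ₗ[ℝ] ℝ) {u p : Fin d → ℝ}
    (hu : u ∈ (convexHull ℝ (V : Set (Fin d → ℝ))).extremePoints ℝ)
    (hp : p ∈ convexHull ℝ (V : Set (Fin d → ℝ))) (hlt : f p < f u) :
    ∃ w ∈ V, (edgeGraph d (convexHull ℝ (V : Set (Fin d → ℝ)))).Adj u w ∧ f w < f u ∧
      w ∈ (convexHull ℝ (V : Set (Fin d → ℝ))).extremePoints ℝ := by
  have huV : u ∈ V := Finset.mem_coe.1 (extremePoints_convexHull_subset hu)
  obtain ⟨v₀, hv₀V, hv₀⟩ := exists_le_of_mem_convexHull V f hp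
  have hv₀lt : f v₀ < f u := lt_of_le_of_lt hv₀ hlt
  have hv₀ne : v₀ ≠ u := fun h => absurd (h ▸ hv₀lt) (lt_irrefl _)
  have hv₀e : v₀ ∈ V.erase u := Finset.mem_erase.2 ⟨hv₀ne, hv₀V⟩
  -- separate u from the other vertices
  have hnot : u ∉ convexHull ℝ ((V.erase u : Finset (Fin d → ℝ)) : Set (Fin d → ℝ)) :=
    extremePoint_not_mem_convexHull_erase V hu
  obtain ⟨g, α, hgu, hgs⟩ := geometric_hahn_banach_point_closed
    (convex_convexHull ℝ _) ((V.erase u).finite_toSet.isClosed_convexHull (𝕜 := ℝ)) hnot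
  have hgpos : ∀ v ∈ V.erase u, 0 < g v - g u := by
    intro v hv
    have := hgs v (subset_convexHull ℝ _ (Finset.mem_coe.2 hv))
    linarith [hgu.trans this]
  -- normalized directions
  set t : (Fin d → ℝ) → (Fin d → ℝ) := fun v => (g v - g u)⁻¹ • (v - u) with ht
  have tsmul : ∀ v ∈ V.erase u, (g v - g u) • t v = v - u := by
    intro v hv
    show (g v - g u) • ((g v - g u)⁻¹ • (v - u)) = v - u
    rw [smul_smul, mul_inv_cancel₀ (hgpos v hv).ne', one_smul]
  set S : Finset (Fin d → ℝ) := (V.erase u).image t with hS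
  have hSne : S.Nonempty := ⟨t v₀, Finset.mem_image_of_mem t hv₀e⟩
  obtain ⟨z, hzS, hzext, hzmin⟩ := exists_extremePoint_min f S.card S (le_refl _) hSne
  -- f z < 0
  have hft : ∀ v ∈ V.erase u, f (t v) = (g v - g u)⁻¹ * (f v - f u) := by
    intro v hv
    show f ((g v - g u)⁻¹ • (v - u)) = _
    rw [map_smul, map_sub, smul_eq_mul]
  have hfz : f z < 0 := by
    have h1 : f (t v₀) < 0 := by
      rw [hft v₀ hv₀e]
      exact mul_neg_of_pos_of_neg (inv_pos.2 (hgpos v₀ hv₀e)) (by linarith)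
    exact lt_of_le_of_lt (hzmin _ (Finset.mem_image_of_mem t hv₀e)) h1
  -- g-value of directions is 1, in particular z ≠ 0
  have hgt : ∀ v ∈ V.erase u, g (t v) = 1 := by
    intro v hv
    show g ((g v - g u)⁻¹ • (v - u)) = 1
    rw [map_smul, map_sub, smul_eq_mul, inv_mul_cancel₀ (hgpos v hv).ne']
  -- separate z from the other directions
  have hznot : z ∉ convexHull ℝ ((S.erase z : Finset (Fin d → ℝ)) : Set (Fin d → ℝ)) :=
    extremePoint_not_mem_convexHull_erase S hzext
  obtain ⟨l, β, hlz, hls⟩ := geometric_hahn_banach_point_closed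
    (convex_convexHull ℝ _) ((S.erase z).finite_toSet.isClosed_convexHull (𝕜 := ℝ)) hznot
  have hlS : ∀ s ∈ S, s ≠ z → l z < l s := by
    intro s hs hsz
    exact hlz.trans (hls s (subset_convexHull ℝ _
      (Finset.mem_coe.2 (Finset.mem_erase.2 ⟨hsz, hs⟩))))
  -- the supporting functional of the edge
  set h : (Fin d → ℝ) →ₗ[ℝ] ℝ := l.toLinearMap - (l z) • g.toLinearMap with hh
  have hhval : ∀ x, h x = l x - l z * g x := by
    intro x; simp [hh, smul_eq_mul]
  have hkey : ∀ v ∈ V.erase u, h v - h u = (g v - g u) * (l (t v) - l z) := by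
    intro v hv
    have hlv : l v - l u = (g v - g u) * l (t v) := by
      have := congrArg l (tsmul v hv)
      rw [map_smul, map_sub, smul_eq_mul] at this
      linarith [this]
    rw [hhval, hhval]
    linear_combination hlv
  have hmge : ∀ s ∈ V, h u ≤ h s := by
    intro s hs
    by_cases hsu : s = u
    · subst hsu; exact le_refl _
    · have hse : s ∈ V.erase u := Finset.mem_erase.2 ⟨hsu, hs⟩
      have hk := hkey s hse
      by_cases hts : t s = z
      · rw [hts, sub_self, mul_zero] at hk
        linarith
      · have hl := hlS (t s) (Finset.mem_image_of_mem t hse) hts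
        have := mul_pos (hgpos s hse) (sub_pos.2 hl)
        linarith
  -- the set R of vertices in direction z, and the furthest one
  set R : Finset (Fin d → ℝ) := (V.erase u).filter (fun v => t v = z) with hR
  have hRne : R.Nonempty := by
    obtain ⟨v, hv, htv⟩ := Finset.mem_image.1 hzS
    exact ⟨v, Finset.mem_filter.2 ⟨hv, htv⟩⟩
  obtain ⟨w, hwR, hwmax⟩ := R.exists_max_image (fun v => g v - g u) hRne
  have hwe : w ∈ V.erase u := (Finset.mem_filter.1 hwR).1
  have hwz : t w = z := (Finset.mem_filter.1 hwR).2
  have hcw : 0 < g w - g u := hgpos w hwe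
  have hwsub : (g w - g u) • z = w - u := by rw [← hwz]; exact tsmul w hwe
  -- points of R lie on the ray u + c • z
  have hray : ∀ v ∈ R, (g v - g u) • z = v - u := by
    intro v hv
    have hve : v ∈ V.erase u := (Finset.mem_filter.1 hv).1
    have htv : t v = z := (Finset.mem_filter.1 hv).2
    rw [← htv]
    exact tsmul v hve
  -- the minimizing face of h is the segment [u, w]
  have hfilter : V.filter (fun s => h s = h u) = insert u R := by
    ext s
    simp only [Finset.mem_filter, Finset.mem_insert, hR, Finset.mem_erase]
    constructor
    · rintro ⟨hs, he⟩
      by_cases hsu : s = u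
      · exact Or.inl hsu
      · right
        have hse : s ∈ V.erase u := Finset.mem_erase.2 ⟨hsu, hs⟩
        refine ⟨⟨hsu, hs⟩, ?_⟩
        by_contra hts
        have hl := hlS (t s) (Finset.mem_image_of_mem t hse) hts
        have hk := hkey s hse
        have := mul_pos (hgpos s hse) (sub_pos.2 hl)
        rw [he] at hk
        linarith
    · rintro (rfl | ⟨⟨hsu, hs⟩, hts⟩)
      · exact ⟨huV, rfl⟩
      · refine ⟨hs, ?_⟩
        have hk := hkey s (Finset.mem_erase.2 ⟨hsu, hs⟩)
        rw [hts, sub_self, mul_zero] at hk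
        linarith
  have hsegeq : convexHull ℝ ((insert u R : Finset (Fin d → ℝ)) : Set (Fin d → ℝ))
      = segment ℝ u w := by
    apply Subset.antisymm
    · apply convexHull_min
      · intro y hy
        rw [Finset.coe_insert] at hy
        rcases hy with rfl | hy
        · exact left_mem_segment ℝ y w
        · rw [Finset.mem_coe] at hy
          have hyray := hray y hy
          have hyv : y ∈ V.erase u := (Finset.mem_filter.1 hy).1
          have hcy : 0 < g y - g u := hgpos y hyv
          have hle : g y - g u ≤ g w - g u := hwmax y hy
          refine ⟨1 - (g y - g u) / (g w - g u), (g y - g u) / (g w - g u), ?_, ?_, ?_, ?_⟩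
          · have h1 : (g y - g u) / (g w - g u) ≤ 1 := by
              rw [div_le_one hcw]; exact hle
            linarith
          · positivity
          · ring
          · have hyy : y = u + (g y - g u) • z := by rw [hyray]; abel
            have hww : w = u + (g w - g u) • z := by rw [hwsub]; abel
            rw [hyy, hww]
            have hgz : g z = 1 := by rw [← hwz]; exact hgt w hwe
            have hgz0 : g z ≠ 0 := by rw [hgz]; exact one_ne_zero
            match_scalars
            · ring
            · simp only [map_add, map_smul, smul_eq_mul, hgz, mul_one]
              field_simp [hcw.ne', hgz0]
              ring
      · exact convex_segment u w
    · rw [← convexHull_pair]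
      apply convexHull_mono
      intro y hy
      rcases hy with rfl | hy
      · simp
      · rw [mem_singleton_iff] at hy
        subst hy
        simp only [Finset.coe_insert, Set.mem_insert_iff]
        right
        exact Finset.mem_coe.2 hwR
  have hface := face_extreme V h (h u) hmge
  have heq := face_eq_convexHull V h (h u) hmge
  rw [hfilter, hsegeq] at heq
  rw [heq] at hface
  -- u ≠ w
  have hzne : z ≠ 0 := by
    intro hz0
    have h1 := hgt w hwe
    rw [hwz, hz0, map_zero] at h1
    exact zero_ne_one h1
  have hwune : w - u ≠ 0 := by
    rw [← hwsub]
    exact smul_ne_zero hcw.ne' hzne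
  have hune : u ≠ w := by
    intro huw
    apply hwune
    rw [huw, sub_self]
  -- conclude
  have hfw : f w < f u := by
    have hfwu : f w - f u = (g w - g u) * f z := by
      have := congrArg f hwsub
      rw [map_smul, map_sub, smul_eq_mul] at this
      linarith [this]
    nlinarith [mul_pos hcw (neg_pos.2 hfz)]
  exact ⟨w, Finset.mem_of_mem_erase hwe, ⟨hune, hface⟩, hfw,
    right_mem_extremePoints_of_isExtreme_segment hface⟩

/-- Monotone descent: from any vertex there is a short walk to a vertex minimizing `f`. -/
lemma exists_walk_to_min {d : ℕ} (V : Finset (Fin d → ℝ))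
    (f : (Fin d → ℝ) →ₗ[ℝ] ℝ) (ival : ∀ v ∈ V, ∃ n : ℤ, f v = (n : ℝ)) (m : ℤ)
    (hmle : ∀ v ∈ V, (m : ℝ) ≤ f v) (hmem : ∃ v ∈ V, f v = (m : ℝ)) :
    ∀ (N : ℕ) (u : Fin d → ℝ),
      u ∈ (convexHull ℝ (V : Set (Fin d → ℝ))).extremePoints ℝ →
      f u - (m : ℝ) ≤ (N : ℝ) →
      ∃ a, a ∈ (convexHull ℝ (V : Set (Fin d → ℝ))).extremePoints ℝ ∧ f a = (m : ℝ) ∧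
        ∃ w : (edgeGraph d (convexHull ℝ (V : Set (Fin d → ℝ)))).Walk u a,
          (w.length : ℝ) ≤ f u - (m : ℝ) := by
  intro N
  induction N with
  | zero =>
    intro u hu hN
    have huV : u ∈ V := Finset.mem_coe.1 (extremePoints_convexHull_subset hu)
    have hum : f u = (m : ℝ) := le_antisymm (by simpa using hN) (hmle u huV)
    exact ⟨u, hu, hum, SimpleGraph.Walk.nil, by simp [hum]⟩
  | succ N ih =>
    intro u hu hN
    have huV : u ∈ V := Finset.mem_coe.1 (extremePoints_convexHull_subset hu)
    by_cases hum : f u = (m : ℝ)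
    · exact ⟨u, hu, hum, SimpleGraph.Walk.nil, by simp [hum]⟩
    · have hugt : (m : ℝ) < f u := lt_of_le_of_ne (hmle u huV) (Ne.symm hum)
      obtain ⟨nu, hnu⟩ := ival u huV
      obtain ⟨v₀, hv₀V, hv₀m⟩ := hmem
      have hp : (v₀ : Fin d → ℝ) ∈ convexHull ℝ (V : Set (Fin d → ℝ)) :=
        subset_convexHull ℝ _ (Finset.mem_coe.2 hv₀V)
      obtain ⟨w, hwV, hadj, hflt, hwext⟩ :=
        exists_improving_neighbor V f hu hp (by rw [hv₀m]; exact hugt)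
      obtain ⟨nw, hnw⟩ := ival w hwV
      have hwm : (m : ℝ) ≤ f w := hmle w hwV
      have hnwle : (nw : ℝ) ≤ (nu : ℝ) - 1 := by
        have : nw < nu := by
          rw [hnu, hnw] at hflt
          exact_mod_cast hflt
        have : nw ≤ nu - 1 := by omega
        push_cast
        exact_mod_cast this
      have hstep : f w - (m : ℝ) ≤ (N : ℝ) := by
        rw [hnw]
        rw [hnu] at hN
        push_cast at hN ⊢
        linarith
      obtain ⟨a, haext, ham, wk, hwk⟩ := ih w hwext hstep
      refine ⟨a, haext, ham, SimpleGraph.Walk.cons hadj wk, ?_⟩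
      rw [SimpleGraph.Walk.length_cons]
      push_cast
      rw [hnu, hnw] at *
      push_cast at hwk hN ⊢
      linarith

/-- The base-(k+1) linear functional, injective on lattice points. -/
noncomputable def baseFun (d k : ℕ) : (Fin d → ℝ) →ₗ[ℝ] ℝ :=
  ∑ i : Fin d, (((k+1)^(i : ℕ) : ℕ) : ℝ) • LinearMap.proj i

lemma baseFun_apply {d k : ℕ} (x : Fin d → ℝ) :
    baseFun d k x = ∑ i : Fin d, (((k+1)^(i : ℕ) : ℕ) : ℝ) * x i := by
  simp [baseFun, LinearMap.sum_apply, LinearMap.smul_apply, LinearMap.proj_apply, smul_eq_mul]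

/-- Uniqueness of base-(k+1) representations. -/
lemma base_repr_injective (k : ℕ) :
    ∀ (d : ℕ) (n n' : Fin d → ℕ), (∀ i, n i ≤ k) → (∀ i, n' i ≤ k) →
    (∑ i : Fin d, n i * (k+1)^(i : ℕ)) = (∑ i : Fin d, n' i * (k+1)^(i : ℕ)) → n = n' := by
  intro d
  induction d with
  | zero => intro n n' _ _ _; funext i; exact absurd i.2 (by omega)
  | succ d ih =>
    intro n n' hn hn' hsum
    rw [Fin.sum_univ_succ, Fin.sum_univ_succ] at hsum
    have hre : ∀ (m : Fin (d+1) → ℕ),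
        (∑ i : Fin d, m i.succ * (k+1)^((i.succ : Fin (d+1)) : ℕ))
          = (k+1) * ∑ i : Fin d, m i.succ * (k+1)^(i : ℕ) := by
      intro m
      rw [Finset.mul_sum]
      apply Finset.sum_congr rfl
      intro i _
      have : ((i.succ : Fin (d+1)) : ℕ) = (i : ℕ) + 1 := rfl
      rw [this, pow_succ]
      ring
    rw [hre n, hre n'] at hsum
    simp only [Fin.val_zero, pow_zero, mul_one] at hsum
    set s := ∑ i : Fin d, n i.succ * (k+1)^(i : ℕ)
    set s' := ∑ i : Fin d, n' i.succ * (k+1)^(i : ℕ)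
    have h0 : n 0 = n' 0 := by
      have e1 : n 0 % (k+1) = n 0 := Nat.mod_eq_of_lt (by have := hn 0; omega)
      have e2 : n' 0 % (k+1) = n' 0 := Nat.mod_eq_of_lt (by have := hn' 0; omega)
      have := congrArg (· % (k+1)) hsum
      simpa [Nat.add_mul_mod_self_left, e1, e2] using this
    have hs : s = s' := by
      rw [h0] at hsum
      have hmul : (k+1) * s = (k+1) * s' := by omega
      exact Nat.eq_of_mul_eq_mul_left (by omega) hmul
    have htail : (fun i : Fin d => n i.succ) = (fun i : Fin d => n' i.succ) :=
      ih _ _ (fun i => hn _) (fun i => hn' _) hs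
    funext i
    rcases Fin.eq_zero_or_eq_succ i with rfl | ⟨j, rfl⟩
    · exact h0
    · exact congrFun htail j

/-- Value of `baseFun` on a lattice point. -/
lemma baseFun_lattice {d k : ℕ} {x : Fin d → ℝ} (n : Fin d → ℕ) (hx : ∀ i, x i = (n i : ℝ)) :
    baseFun d k x = ((∑ i : Fin d, n i * (k+1)^(i : ℕ) : ℕ) : ℝ) := by
  rw [baseFun_apply]
  push_cast
  apply Finset.sum_congr rfl
  intro i _
  rw [hx i]
  ring

lemma geom_sum_eq_lat (k : ℕ) : ∀ d : ℕ, (∑ i : Fin d, k * (k+1)^(i : ℕ)) = (k+1)^d - 1 := by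
  intro d
  induction d with
  | zero => simp
  | succ d ihd =>
    rw [Fin.sum_univ_succ]
    have hre : (∑ i : Fin d, k * (k+1)^(((i.succ : Fin (d+1))) : ℕ))
        = (k+1) * ∑ i : Fin d, k * (k+1)^(i : ℕ) := by
      rw [Finset.mul_sum]
      apply Finset.sum_congr rfl
      intro i _
      have : ((i.succ : Fin (d+1)) : ℕ) = (i : ℕ) + 1 := rfl
      rw [this, pow_succ]
      ring
    have h1 : 1 ≤ (k+1)^d := Nat.one_le_pow _ _ (by omega)
    cases' Nat.exists_eq_add_of_le h1 with c hc
    rw [hre, ihd, pow_succ, hc]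
    have hc' : 1 + c - 1 = c := by omega
    rw [hc']
    simp only [Fin.val_zero, pow_zero, mul_one]
    have key : k + (k+1) * c + 1 = (1+c)*(k+1) := by ring
    omega

/-- In a lattice polytope any two vertices are joined by a walk of length at most `2*(k+1)^d`. -/
lemma lattice_walk_bound {d k : ℕ} (V : Finset (Fin d → ℝ))
    (hlat : ∀ x ∈ V, ∀ i, ∃ m : ℕ, m ≤ k ∧ x i = (m : ℝ))
    {x y : Fin d → ℝ}
    (hx : x ∈ (convexHull ℝ (V : Set (Fin d → ℝ))).extremePoints ℝ)
    (hy : y ∈ (convexHull ℝ (V : Set (Fin d → ℝ))).extremePoints ℝ) :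
    ∃ w : (edgeGraph d (convexHull ℝ (V : Set (Fin d → ℝ)))).Walk x y,
      w.length ≤ 2 * (k+1)^d := by
  classical
  -- choose lattice coordinates for every vertex
  have hcoord : ∀ v ∈ V, ∃ n : Fin d → ℕ, (∀ i, n i ≤ k) ∧ ∀ i, v i = (n i : ℝ) := by
    intro v hv
    choose n hn1 hn2 using hlat v hv
    exact ⟨n, hn1, hn2⟩
  set f := baseFun d k with hf
  -- values are naturals bounded by (k+1)^d - 1
  have hval : ∀ v ∈ V, ∃ N : ℕ, f v = (N : ℝ) ∧ N < (k+1)^d := by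
    intro v hv
    obtain ⟨n, hn1, hn2⟩ := hcoord v hv
    refine ⟨∑ i : Fin d, n i * (k+1)^(i : ℕ), baseFun_lattice n hn2, ?_⟩
    calc ∑ i : Fin d, n i * (k+1)^(i : ℕ) ≤ ∑ i : Fin d, k * (k+1)^(i : ℕ) :=
          Finset.sum_le_sum (fun i _ => Nat.mul_le_mul_right _ (hn1 i))
      _ < (k+1)^d := by
          rw [geom_sum_eq_lat]
          have h1 : 1 ≤ (k+1)^d := Nat.one_le_pow _ _ (by omega)
          omega
  have hxV : x ∈ V := Finset.mem_coe.1 (extremePoints_convexHull_subset hx)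
  have hyV : y ∈ V := Finset.mem_coe.1 (extremePoints_convexHull_subset hy)
  have hVne : V.Nonempty := ⟨x, hxV⟩
  -- the minimum value of f on V
  obtain ⟨vm, hvmV, hvmmin⟩ := V.exists_min_image f hVne
  obtain ⟨Nm, hNm, hNmlt⟩ := hval vm hvmV
  have hival : ∀ v ∈ V, ∃ n : ℤ, f v = (n : ℝ) := by
    intro v hv
    obtain ⟨N, hN, _⟩ := hval v hv
    exact ⟨(N : ℤ), by rw [hN]; push_cast; ring⟩
  have hmle : ∀ v ∈ V, ((Nm : ℤ) : ℝ) ≤ f v := by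
    intro v hv
    have := hvmmin v hv
    rw [hNm] at this
    push_cast
    exact this
  have hmem : ∃ v ∈ V, f v = (((Nm : ℤ)) : ℝ) := ⟨vm, hvmV, by rw [hNm]; push_cast; ring⟩
  -- descend from x and from y
  obtain ⟨Nx, hNx, hNxlt⟩ := hval x hxV
  obtain ⟨Ny, hNy, hNylt⟩ := hval y hyV
  have hbound : ∀ {zz : Fin d → ℝ} (hz : zz ∈ V) (Nz : ℕ), f zz = (Nz : ℝ) → Nz < (k+1)^d →
      f zz - ((Nm : ℤ) : ℝ) ≤ (((k+1)^d : ℕ) : ℝ) := by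
    intro zz hz Nz hNz hNzlt
    rw [hNz]
    push_cast
    have : (Nz : ℝ) ≤ (((k+1)^d : ℕ) : ℝ) := by exact_mod_cast hNzlt.le
    have h0 : (0 : ℝ) ≤ (Nm : ℝ) := by positivity
    push_cast at this
    linarith
  obtain ⟨a, haext, ham, wx, hwx⟩ := exists_walk_to_min V f hival (Nm : ℤ) hmle hmem
    ((k+1)^d) x hx (hbound hxV Nx hNx hNxlt)
  obtain ⟨b, hbext, hbm, wy, hwy⟩ := exists_walk_to_min V f hival (Nm : ℤ) hmle hmem
    ((k+1)^d) y hy (hbound hyV Ny hNy hNylt)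
  -- the minimizer is unique because f is injective on lattice points
  have hab : a = b := by
    have haV : a ∈ V := Finset.mem_coe.1 (extremePoints_convexHull_subset haext)
    have hbV : b ∈ V := Finset.mem_coe.1 (extremePoints_convexHull_subset hbext)
    obtain ⟨na, hna1, hna2⟩ := hcoord a haV
    obtain ⟨nb, hnb1, hnb2⟩ := hcoord b hbV
    have hfa : f a = ((∑ i : Fin d, na i * (k+1)^(i : ℕ) : ℕ) : ℝ) := baseFun_lattice na hna2
    have hfb : f b = ((∑ i : Fin d, nb i * (k+1)^(i : ℕ) : ℕ) : ℝ) := baseFun_lattice nb hnb2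
    have heq : (∑ i : Fin d, na i * (k+1)^(i : ℕ)) = ∑ i : Fin d, nb i * (k+1)^(i : ℕ) := by
      have : f a = f b := by rw [ham, hbm]
      rw [hfa, hfb] at this
      exact_mod_cast this
    have := base_repr_injective k d na nb hna1 hnb1 heq
    funext i
    rw [hna2 i, hnb2 i, this]
  subst hab
  refine ⟨wx.append wy.reverse, ?_⟩
  rw [SimpleGraph.Walk.length_append, SimpleGraph.Walk.length_reverse]
  have hwx' : (wx.length : ℝ) ≤ (((k+1)^d : ℕ) : ℝ) := by
    calc (wx.length : ℝ) ≤ f x - ((Nm : ℤ) : ℝ) := hwx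
      _ ≤ _ := hbound hxV Nx hNx hNxlt
  have hwy' : (wy.length : ℝ) ≤ (((k+1)^d : ℕ) : ℝ) := by
    calc (wy.length : ℝ) ≤ f y - ((Nm : ℤ) : ℝ) := hwy
      _ ≤ _ := hbound hyV Ny hNy hNylt
  have h1 : wx.length ≤ (k+1)^d := by exact_mod_cast hwx'
  have h2 : wy.length ≤ (k+1)^d := by exact_mod_cast hwy'
  omega

/-- All vertex-pair distances in a lattice polytope are bounded. -/
lemma dist_bound {d k : ℕ} {P : Set (Fin d → ℝ)} (hP : IsLatticePolytope d k P)
    {x y : Fin d → ℝ} (hx : x ∈ P.extremePoints ℝ) (hy : y ∈ P.extremePoints ℝ) :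
    (edgeGraph d P).dist x y ≤ 2 * (k+1)^d := by
  obtain ⟨V, hVne, hlat, rfl⟩ := hP
  obtain ⟨w, hw⟩ := lattice_walk_bound V hlat hx hy
  exact (SimpleGraph.dist_le w).trans hw

lemma polyDiam_bound {d k : ℕ} {P : Set (Fin d → ℝ)} (hP : IsLatticePolytope d k P) :
    polyDiam d P ≤ 2 * (k+1)^d := by
  apply csSup_le'
  rintro n ⟨x, hx, y, hy, rfl⟩
  exact dist_bound hP hx hy

lemma dist_le_polyDiam {d k : ℕ} {P : Set (Fin d → ℝ)} (hP : IsLatticePolytope d k P)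
    {x y : Fin d → ℝ} (hx : x ∈ P.extremePoints ℝ) (hy : y ∈ P.extremePoints ℝ) :
    (edgeGraph d P).dist x y ≤ polyDiam d P := by
  apply le_csSup
  · refine ⟨2 * (k+1)^d, ?_⟩
    rintro n ⟨x', hx', y', hy', rfl⟩
    exact dist_bound hP hx' hy'
  · exact ⟨x, hx, y, hy, rfl⟩

lemma polyDiam_le_deltaLP {d k : ℕ} {P : Set (Fin d → ℝ)} (hP : IsLatticePolytope d k P) :
    polyDiam d P ≤ deltaLP d k := by
  apply le_csSup
  · refine ⟨2 * (k+1)^d, ?_⟩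
    rintro n ⟨Q, hQ, rfl⟩
    exact polyDiam_bound hQ
  · exact ⟨P, hP, rfl⟩

/-- Affine images of extreme sets under injective maps. -/
lemma isExtreme_image {E F : Type*} [AddCommGroup E] [Module ℝ E] [AddCommGroup F] [Module ℝ F]
    (φ : E →ᵃ[ℝ] F) (hφ : Function.Injective φ) {A B : Set E} (h : IsExtreme ℝ A B) :
    IsExtreme ℝ (φ '' A) (φ '' B) := by
  constructor
  · exact image_mono h.1
  · rintro x₁ ⟨y₁, hy₁, rfl⟩ x₂ ⟨y₂, hy₂, rfl⟩ x ⟨y, hyB, rfl⟩ hx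
    rw [← image_openSegment] at hx
    obtain ⟨y', hy', he⟩ := hx
    cases hφ he
    obtain ⟨h1, h2⟩ := And.intro (h.2 hy₁ hy₂ hyB hy') (h.right_mem_of_mem_openSegment hy₁ hy₂ hyB hy')
    exact mem_image_of_mem _ h1

lemma isExtreme_of_isExtreme_image {E F : Type*} [AddCommGroup E] [Module ℝ E] [AddCommGroup F]
    [Module ℝ F] (φ : E →ᵃ[ℝ] F) (hφ : Function.Injective φ) {A B : Set E} (hBA : B ⊆ A)
    (h : IsExtreme ℝ (φ '' A) (φ '' B)) : IsExtreme ℝ A B := by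
  constructor
  · exact hBA
  · intro x₁ hx₁ x₂ hx₂ x hxB hseg
    have hφseg : φ x ∈ openSegment ℝ (φ x₁) (φ x₂) := by
      rw [← image_openSegment]
      exact mem_image_of_mem _ hseg
    obtain ⟨h1, h2⟩ := And.intro (h.2 (mem_image_of_mem _ hx₁) (mem_image_of_mem _ hx₂)
      (mem_image_of_mem _ hxB) hφseg) (h.right_mem_of_mem_openSegment (mem_image_of_mem _ hx₁)
      (mem_image_of_mem _ hx₂) (mem_image_of_mem _ hxB) hφseg)
    obtain ⟨y₁, hy₁, he₁⟩ := h1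
    obtain ⟨y₂, hy₂, he₂⟩ := h2
    exact hφ he₁ ▸ hy₁

/-- Prepending a fixed coordinate, as an affine map. -/
noncomputable def consAff (e : ℕ) (c : ℝ) : (Fin e → ℝ) →ᵃ[ℝ] (Fin (e+1) → ℝ) where
  toFun := fun y => Fin.cons c y
  linear :=
    { toFun := fun y => Fin.cons 0 y
      map_add' := by
        intro a b
        funext i
        refine Fin.cases ?_ ?_ i
        · simp
        · intro j; simp
      map_smul' := by
        intro r a
        funext i
        refine Fin.cases ?_ ?_ i
        · simp
        · intro j; simp }
  map_vadd' := by
    intro p v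
    funext i
    refine Fin.cases ?_ ?_ i
    · simp
    · intro j; simp

/-- Dropping the first coordinate, as a linear map. -/
noncomputable def tailLin (e : ℕ) : (Fin (e+1) → ℝ) →ₗ[ℝ] (Fin e → ℝ) where
  toFun := fun x => Fin.tail x
  map_add' := fun a b => rfl
  map_smul' := fun r a => rfl

lemma extremePoint_mem_subset {d : ℕ} {P F : Set (Fin d → ℝ)} (hFP : F ⊆ P)
    {a : Fin d → ℝ} (ha : a ∈ P.extremePoints ℝ) (haF : a ∈ F) : a ∈ F.extremePoints ℝ :=
  ⟨haF, fun x₁ h₁ x₂ h₂ hseg => ha.2 (hFP h₁) (hFP h₂) hseg⟩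

set_option maxHeartbeats 1000000 in
/-- Two vertices on a common facet-like face are joined by a walk of length ≤ δ(e,k). -/
lemma face_walk_bound {e k : ℕ} (V : Finset (Fin (e+1) → ℝ))
    (hlat : ∀ x ∈ V, ∀ i, ∃ m : ℕ, m ≤ k ∧ x i = (m : ℝ))
    (r : ℝ) (VF : Finset (Fin (e+1) → ℝ)) (hVFsub : VF ⊆ V)
    (hVFc : ∀ x ∈ VF, x 0 = r)
    (hFe : IsExtreme ℝ (convexHull ℝ (V : Set (Fin (e+1) → ℝ)))
      (convexHull ℝ (VF : Set (Fin (e+1) → ℝ))))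
    {a b : Fin (e+1) → ℝ}
    (ha : a ∈ (convexHull ℝ (V : Set (Fin (e+1) → ℝ))).extremePoints ℝ)
    (hb : b ∈ (convexHull ℝ (V : Set (Fin (e+1) → ℝ))).extremePoints ℝ)
    (haF : a ∈ convexHull ℝ (VF : Set (Fin (e+1) → ℝ)))
    (hbF : b ∈ convexHull ℝ (VF : Set (Fin (e+1) → ℝ))) :
    ∃ w : (edgeGraph (e+1) (convexHull ℝ (V : Set (Fin (e+1) → ℝ)))).Walk a b,
      w.length ≤ deltaLP e k := by
  classical
  have hVFne : VF.Nonempty := by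
    rcases VF.eq_empty_or_nonempty with h | h
    · rw [h] at haF; simp at haF
    · exact h
  set σ := consAff e r with hσ
  -- F lies in the hyperplane x 0 = r
  have hFhyp : ∀ x ∈ convexHull ℝ (VF : Set (Fin (e+1) → ℝ)), x 0 = r := by
    intro x hx
    have hconv : Convex ℝ {y : Fin (e+1) → ℝ |
        (LinearMap.proj 0 : (Fin (e+1) → ℝ) →ₗ[ℝ] ℝ) y = r} :=
      convex_hyperplane (LinearMap.isLinear _) r
    exact convexHull_min (fun v hv => hVFc v (Finset.mem_coe.1 hv)) hconv hx
  have hσπ : ∀ x ∈ convexHull ℝ (VF : Set (Fin (e+1) → ℝ)), σ (Fin.tail x) = x := by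
    intro x hx
    show Fin.cons r (Fin.tail x) = x
    rw [← hFhyp x hx]
    exact Fin.cons_self_tail x
  have hσinj : Function.Injective σ := by
    intro y1 y2 h12
    have h3 : Fin.tail (Fin.cons r y1 : Fin (e+1) → ℝ)
        = Fin.tail (Fin.cons r y2 : Fin (e+1) → ℝ) := congrArg Fin.tail h12
    rwa [Fin.tail_cons, Fin.tail_cons] at h3
  -- the projected polytope
  set VQ : Finset (Fin e → ℝ) := VF.image (fun x => Fin.tail x) with hVQ
  have hQπ : convexHull ℝ (VQ : Set (Fin e → ℝ))
      = (fun x => Fin.tail x) '' (convexHull ℝ (VF : Set (Fin (e+1) → ℝ))) := by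
    rw [hVQ, Finset.coe_image]
    exact ((tailLin e).image_convexHull ((VF : Set (Fin (e+1) → ℝ)))).symm
  have hσQ : σ '' (convexHull ℝ (VQ : Set (Fin e → ℝ)))
      = convexHull ℝ (VF : Set (Fin (e+1) → ℝ)) := by
    rw [hQπ]
    apply Subset.antisymm
    · rintro x ⟨y, ⟨zz, hzz, rfl⟩, rfl⟩
      rw [hσπ zz hzz]
      exact hzz
    · intro x hx
      exact ⟨Fin.tail x, ⟨x, hx, rfl⟩, hσπ x hx⟩
  have hQlat : IsLatticePolytope e k (convexHull ℝ (VQ : Set (Fin e → ℝ))) := by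
    refine ⟨VQ, ?_, ?_, rfl⟩
    · obtain ⟨x, hx⟩ := hVFne
      exact ⟨Fin.tail x, Finset.mem_image_of_mem _ hx⟩
    · intro x hx i
      obtain ⟨vv, hvv, rfl⟩ := Finset.mem_image.1 hx
      exact hlat vv (hVFsub hvv) i.succ
  have hlatQ : ∀ x ∈ VQ, ∀ i, ∃ m : ℕ, m ≤ k ∧ x i = (m : ℝ) := by
    intro x hx i
    obtain ⟨vv, hvv, rfl⟩ := Finset.mem_image.1 hx
    exact hlat vv (hVFsub hvv) i.succ
  -- extreme points project to extreme points
  have haFe : a ∈ (convexHull ℝ (VF : Set (Fin (e+1) → ℝ))).extremePoints ℝ :=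
    extremePoint_mem_subset hFe.1 ha haF
  have hbFe : b ∈ (convexHull ℝ (VF : Set (Fin (e+1) → ℝ))).extremePoints ℝ :=
    extremePoint_mem_subset hFe.1 hb hbF
  have hmemQ : ∀ {x : Fin (e+1) → ℝ}, x ∈ convexHull ℝ (VF : Set (Fin (e+1) → ℝ)) →
      Fin.tail x ∈ convexHull ℝ (VQ : Set (Fin e → ℝ)) := by
    intro x hx
    rw [hQπ]
    exact ⟨x, hx, rfl⟩
  have hextQ : ∀ {x : Fin (e+1) → ℝ},
      x ∈ (convexHull ℝ (VF : Set (Fin (e+1) → ℝ))).extremePoints ℝ →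
      x ∈ convexHull ℝ (VF : Set (Fin (e+1) → ℝ)) →
      Fin.tail x ∈ (convexHull ℝ (VQ : Set (Fin e → ℝ))).extremePoints ℝ := by
    intro x hxe hxF
    rw [← isExtreme_singleton]
    apply isExtreme_of_isExtreme_image σ hσinj (singleton_subset_iff.2 (hmemQ hxF))
    rw [image_singleton]
    have : σ (Fin.tail x) = x := hσπ x hxF
    rw [this, hσQ]
    exact isExtreme_singleton.2 hxe
  have hπa := hextQ haFe haF
  have hπb := hextQ hbFe hbF
  -- a walk in Q realizing the distance
  obtain ⟨w0, _⟩ := lattice_walk_bound VQ hlatQ hπa hπb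
  obtain ⟨wd, hwd⟩ := SimpleGraph.Reachable.exists_walk_length_eq_dist ⟨w0⟩
  -- transport it to P
  have hhom : ∀ {x y : Fin e → ℝ},
      (edgeGraph e (convexHull ℝ (VQ : Set (Fin e → ℝ)))).Adj x y →
      (edgeGraph (e+1) (convexHull ℝ (V : Set (Fin (e+1) → ℝ)))).Adj (σ x) (σ y) := by
    rintro x y ⟨hxy, hext⟩
    refine ⟨fun h => hxy (hσinj h), ?_⟩
    have h1 : IsExtreme ℝ (σ '' convexHull ℝ (VQ : Set (Fin e → ℝ)))
        (σ '' segment ℝ x y) := isExtreme_image σ hσinj hext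
    rw [hσQ, image_segment ℝ σ x y] at h1
    exact hFe.trans h1
  let φ : (edgeGraph e (convexHull ℝ (VQ : Set (Fin e → ℝ)))) →g
      (edgeGraph (e+1) (convexHull ℝ (V : Set (Fin (e+1) → ℝ)))) :=
    ⟨fun y => σ y, fun had => hhom had⟩
  refine ⟨(wd.map φ).copy (hσπ a haF) (hσπ b hbF), ?_⟩
  rw [SimpleGraph.Walk.length_copy, SimpleGraph.Walk.length_map, hwd]
  exact le_trans (dist_le_polyDiam hQlat hπa hπb) (polyDiam_le_deltaLP hQlat)

set_option maxHeartbeats 1000000 in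
theorem recursive_upper_bound (d k : ℕ) (hd : 3 ≤ d)
    (P : Set (Fin d → ℝ)) (hP : IsLatticePolytope d k P)
    (u v : Fin d → ℝ) (hu : u ∈ P.extremePoints ℝ) (hv : v ∈ P.extremePoints ℝ) :
    (edgeGraph d P).dist u v ≤ deltaLP (d - 1) k + k := by
  obtain ⟨e, rfl⟩ : ∃ e, d = e + 1 := ⟨d - 1, by omega⟩
  simp only [Nat.add_sub_cancel]
  obtain ⟨V, hVne, hlat, rfl⟩ := hP
  classical
  have huV : u ∈ V := Finset.mem_coe.1 (extremePoints_convexHull_subset hu)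
  have hvV : v ∈ V := Finset.mem_coe.1 (extremePoints_convexHull_subset hv)
  obtain ⟨nu, hnuk, hnu⟩ := hlat u huV 0
  obtain ⟨nv, hnvk, hnv⟩ := hlat v hvV 0
  by_cases hcase : nu + nv ≤ k
  · -- use the functional x ↦ x 0
    set f : (Fin (e+1) → ℝ) →ₗ[ℝ] ℝ := LinearMap.proj 0 with hf
    have hfval : ∀ x : Fin (e+1) → ℝ, f x = x 0 := fun x => rfl
    obtain ⟨vm, hvmV, hvmmin⟩ := V.exists_min_image (fun x => f x) hVne
    obtain ⟨cm, hcmk, hcm⟩ := hlat vm hvmV 0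
    have hfvm : f vm = (cm : ℝ) := by rw [hfval, hcm]
    have ival : ∀ w ∈ V, ∃ n : ℤ, f w = (n : ℝ) := by
      intro w hw
      obtain ⟨n, hnk, hn⟩ := hlat w hw 0
      exact ⟨(n : ℤ), by rw [hfval, hn]; norm_num⟩
    have hmle : ∀ w ∈ V, (((cm : ℤ)) : ℝ) ≤ f w := by
      intro w hw
      have h1 := hvmmin w hw
      rw [hfvm] at h1
      push_cast
      exact h1
    have hmem : ∃ w ∈ V, f w = (((cm : ℤ)) : ℝ) := ⟨vm, hvmV, by rw [hfvm]; push_cast; ring⟩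
    have hcmnu : (cm : ℝ) ≤ (nu : ℝ) := by
      have := hvmmin u huV
      rw [hfvm, hfval, hnu] at this
      exact this
    have hcmnv : (cm : ℝ) ≤ (nv : ℝ) := by
      have := hvmmin v hvV
      rw [hfvm, hfval, hnv] at this
      exact this
    obtain ⟨a, haext, ham, wu, hwu⟩ := exists_walk_to_min V f ival (cm : ℤ) hmle hmem
      nu u hu (by rw [hfval, hnu]; push_cast; linarith [Nat.cast_nonneg (α := ℝ) cm])
    obtain ⟨b, hbext, hbm, wv, hwv⟩ := exists_walk_to_min V f ival (cm : ℤ) hmle hmem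
      nv v hv (by rw [hfval, hnv]; push_cast; linarith [Nat.cast_nonneg (α := ℝ) cm])
    -- the face
    have hmge : ∀ w ∈ V, ((cm : ℕ) : ℝ) ≤ f w := by
      intro w hw
      have := hmle w hw
      push_cast at this ⊢
      exact this
    obtain ⟨VF, hVFsub, hVFmem, hVFeq⟩ := face_eq_convexHull' V f ((cm : ℕ) : ℝ) hmge
    have hFe : IsExtreme ℝ (convexHull ℝ (V : Set (Fin (e+1) → ℝ)))
        (convexHull ℝ (VF : Set (Fin (e+1) → ℝ))) := by
      rw [← hVFeq]
      exact face_extreme V f _ hmge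
    have hVFc : ∀ x ∈ VF, x 0 = ((cm : ℕ) : ℝ) := by
      intro x hx
      have := ((hVFmem x).1 hx).2
      rwa [hfval] at this
    have haV : a ∈ V := Finset.mem_coe.1 (extremePoints_convexHull_subset haext)
    have hbV : b ∈ V := Finset.mem_coe.1 (extremePoints_convexHull_subset hbext)
    have ham' : f a = ((cm : ℕ) : ℝ) := by rw [ham]; push_cast; ring
    have hbm' : f b = ((cm : ℕ) : ℝ) := by rw [hbm]; push_cast; ring
    have haF : a ∈ convexHull ℝ (VF : Set (Fin (e+1) → ℝ)) :=
      subset_convexHull ℝ _ (Finset.mem_coe.2 ((hVFmem a).2 ⟨haV, ham'⟩))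
    have hbF : b ∈ convexHull ℝ (VF : Set (Fin (e+1) → ℝ)) :=
      subset_convexHull ℝ _ (Finset.mem_coe.2 ((hVFmem b).2 ⟨hbV, hbm'⟩))
    obtain ⟨wF, hwF⟩ := face_walk_bound V hlat ((cm : ℕ) : ℝ) VF hVFsub hVFc hFe
      haext hbext haF hbF
    -- assemble
    have hdist := SimpleGraph.dist_le (wu.append (wF.append wv.reverse))
    rw [SimpleGraph.Walk.length_append, SimpleGraph.Walk.length_append,
      SimpleGraph.Walk.length_reverse] at hdist
    have hsum : wu.length + wv.length ≤ k := by
      have h1 : (wu.length : ℝ) ≤ (nu : ℝ) - (cm : ℝ) := by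
        rw [hfval, hnu] at hwu
        push_cast at hwu ⊢
        linarith
      have h2 : (wv.length : ℝ) ≤ (nv : ℝ) - (cm : ℝ) := by
        rw [hfval, hnv] at hwv
        push_cast at hwv ⊢
        linarith
      have hc : (0 : ℝ) ≤ (cm : ℝ) := Nat.cast_nonneg _
      have hk : (nu : ℝ) + (nv : ℝ) ≤ (k : ℝ) := by exact_mod_cast hcase
      have : (wu.length : ℝ) + (wv.length : ℝ) ≤ (k : ℝ) := by linarith
      exact_mod_cast this
    omega
  · -- use the functional x ↦ -(x 0)
    set f : (Fin (e+1) → ℝ) →ₗ[ℝ] ℝ := -(LinearMap.proj 0) with hf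
    have hfval : ∀ x : Fin (e+1) → ℝ, f x = -(x 0) := fun x => rfl
    obtain ⟨vm, hvmV, hvmmin⟩ := V.exists_min_image (fun x => f x) hVne
    obtain ⟨cm, hcmk, hcm⟩ := hlat vm hvmV 0
    set m : ℤ := -(cm : ℤ) with hm
    have hfvm : f vm = ((m : ℤ) : ℝ) := by rw [hfval, hcm, hm]; push_cast; ring
    have ival : ∀ w ∈ V, ∃ n : ℤ, f w = (n : ℝ) := by
      intro w hw
      obtain ⟨n, hnk, hn⟩ := hlat w hw 0
      exact ⟨(-(n : ℤ)), by rw [hfval, hn]; push_cast; ring⟩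
    have hmle : ∀ w ∈ V, ((m : ℤ) : ℝ) ≤ f w := by
      intro w hw
      have h1 := hvmmin w hw
      rw [hfvm] at h1
      exact h1
    have hmem : ∃ w ∈ V, f w = ((m : ℤ) : ℝ) := ⟨vm, hvmV, hfvm⟩
    have hcmnu : (nu : ℝ) ≤ (cm : ℝ) := by
      have := hvmmin u huV
      rw [hfvm, hfval, hnu, hm] at this
      push_cast at this ⊢
      linarith
    have hcmnv : (nv : ℝ) ≤ (cm : ℝ) := by
      have := hvmmin v hvV
      rw [hfvm, hfval, hnv, hm] at this
      push_cast at this ⊢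
      linarith
    obtain ⟨a, haext, ham, wu, hwu⟩ := exists_walk_to_min V f ival m hmle hmem
      cm u hu (by rw [hfval, hnu, hm]; push_cast; linarith [Nat.cast_nonneg (α := ℝ) nu])
    obtain ⟨b, hbext, hbm, wv, hwv⟩ := exists_walk_to_min V f ival m hmle hmem
      cm v hv (by rw [hfval, hnv, hm]; push_cast; linarith [Nat.cast_nonneg (α := ℝ) nv])
    -- the face
    have hmge : ∀ w ∈ V, (-((cm : ℕ) : ℝ)) ≤ f w := by
      intro w hw
      have := hmle w hw
      rw [hm] at this
      push_cast at this ⊢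
      exact this
    obtain ⟨VF, hVFsub, hVFmem, hVFeq⟩ := face_eq_convexHull' V f (-((cm : ℕ) : ℝ)) hmge
    have hFe : IsExtreme ℝ (convexHull ℝ (V : Set (Fin (e+1) → ℝ)))
        (convexHull ℝ (VF : Set (Fin (e+1) → ℝ))) := by
      rw [← hVFeq]
      exact face_extreme V f _ hmge
    have hVFc : ∀ x ∈ VF, x 0 = ((cm : ℕ) : ℝ) := by
      intro x hx
      have := ((hVFmem x).1 hx).2
      rw [hfval] at this
      linarith
    have haV : a ∈ V := Finset.mem_coe.1 (extremePoints_convexHull_subset haext)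
    have hbV : b ∈ V := Finset.mem_coe.1 (extremePoints_convexHull_subset hbext)
    have ham' : f a = (-((cm : ℕ) : ℝ)) := by rw [ham, hm]; push_cast; ring
    have hbm' : f b = (-((cm : ℕ) : ℝ)) := by rw [hbm, hm]; push_cast; ring
    have haF : a ∈ convexHull ℝ (VF : Set (Fin (e+1) → ℝ)) :=
      subset_convexHull ℝ _ (Finset.mem_coe.2 ((hVFmem a).2 ⟨haV, ham'⟩))
    have hbF : b ∈ convexHull ℝ (VF : Set (Fin (e+1) → ℝ)) :=
      subset_convexHull ℝ _ (Finset.mem_coe.2 ((hVFmem b).2 ⟨hbV, hbm'⟩))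
    obtain ⟨wF, hwF⟩ := face_walk_bound V hlat ((cm : ℕ) : ℝ) VF hVFsub hVFc hFe
      haext hbext haF hbF
    -- assemble
    have hdist := SimpleGraph.dist_le (wu.append (wF.append wv.reverse))
    rw [SimpleGraph.Walk.length_append, SimpleGraph.Walk.length_append,
      SimpleGraph.Walk.length_reverse] at hdist
    have hsum : wu.length + wv.length ≤ k := by
      have h1 : (wu.length : ℝ) ≤ (cm : ℝ) - (nu : ℝ) := by
        rw [hfval, hnu, hm] at hwu
        push_cast at hwu ⊢
        linarith
      have h2 : (wv.length : ℝ) ≤ (cm : ℝ) - (nv : ℝ) := by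
        rw [hfval, hnv, hm] at hwv
        push_cast at hwv ⊢
        linarith
      have hck : (cm : ℝ) ≤ (k : ℝ) := by exact_mod_cast hcmk
      have hk : (k : ℝ) + 1 ≤ (nu : ℝ) + (nv : ℝ) := by
        have : k + 1 ≤ nu + nv := by omega
        exact_mod_cast this
      have : (wu.length : ℝ) + (wv.length : ℝ) ≤ (k : ℝ) := by linarith
      exact_mod_cast this
    omega
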